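/- Every open subset U of a completely regular k_ℝ-space X is itself a k_ℝ-space in the induced topology. -/

import Mathlib

open Set Topology Filter

/-- A Hausdorff topological space `X` is a `k_ℝ`-space if every real-valued function
on `X` that is continuous on all compact subsets is continuous. -/
def IsKRSpace (X : Type*) [TopologicalSpace X] : Prop :=
  ∀ f : X → ℝ, (∀ K : Set X, IsCompact K → ContinuousOn f K) → Continuous f

/-- Every open subset of a completely regular (Hausdorff) `k_ℝ`-space is a `k_ℝ`-space
in the induced topology. -/
theorem isKRSpace_of_isOpen {X : Type*} [TopologicalSpace X] [T2Space X]
    [CompletelyRegularSpace X] (hX : IsKRSpace X) (U : Set X) (hU : IsOpen U) :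
    IsKRSpace U := by
  classical
  intro f hf
  rw [continuous_iff_continuousAt]
  intro x₀
  set c : ℝ := f x₀ with hc
  -- truncated function
  set f' : U → ℝ := fun x => max (c - 1) (min (c + 1) (f x)) with hf'
  have hf'cont : ∀ K : Set U, IsCompact K → ContinuousOn f' K := by
    intro K hK
    exact (continuous_const.max (continuous_const.min continuous_id)).comp_continuousOn
      (hf K hK)
  have hf'bd : ∀ x : U, |f' x - c| ≤ 1 := by
    intro x
    rw [abs_le]
    constructor
    · have := le_max_left (c - 1) (min (c + 1) (f x))
      simp only [hf']; linarith
    · simp only [hf']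
      have h1 : min (c + 1) (f x) ≤ c + 1 := min_le_left _ _
      have : max (c - 1) (min (c + 1) (f x)) ≤ c + 1 := max_le (by linarith) h1
      linarith
  have hf'x₀ : f' x₀ = c := by
    show max (c - 1) (min (c + 1) (f x₀)) = c
    rw [← hc, min_eq_right (by linarith), max_eq_right (by linarith)]
  -- Urysohn-type function
  obtain ⟨ψ, hψc, hψ0, hψ1⟩ :=
    CompletelyRegularSpace.completely_regular (x₀ : X) Uᶜ hU.isClosed_compl
      (by simp [x₀.2])
  set φ : X → ℝ := fun x => 1 - (ψ x : ℝ) with hφ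
  have hφc : Continuous φ := continuous_const.sub (continuous_subtype_val.comp hψc)
  have hφ1 : φ x₀ = 1 := by simp [hφ, hψ0]
  have hφ0 : ∀ x, x ∉ U → φ x = 0 := by
    intro x hx
    have := hψ1 (mem_compl hx)
    simp [hφ, this]
  have hφmem : ∀ x, 0 ≤ φ x ∧ φ x ≤ 1 := by
    intro x
    have h1 := (ψ x).2.1
    have h2 := (ψ x).2.2
    constructor <;> simp [hφ] <;> linarith
  have hφpos : ∀ x, 0 < φ x → x ∈ U := by
    intro x hx
    by_contra h
    rw [hφ0 x h] at hx; exact lt_irrefl 0 hx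
  -- extension
  set F : X → ℝ := fun x => if h : x ∈ U then f' ⟨x, h⟩ else c with hF
  have hFbd : ∀ x, |F x - c| ≤ 1 := by
    intro x
    by_cases h : x ∈ U
    · simp only [hF, dif_pos h]; exact hf'bd ⟨x, h⟩
    · simp [hF, dif_neg h]
  set g : X → ℝ := fun x => φ x * (F x - c) with hg
  have hgbd : ∀ x, |g x| ≤ φ x := by
    intro x
    rw [hg, abs_mul, abs_of_nonneg (hφmem x).1]
    calc φ x * |F x - c| ≤ φ x * 1 :=
          mul_le_mul_of_nonneg_left (hFbd x) (hφmem x).1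
      _ = φ x := mul_one _
  -- g is continuous on compacts
  have hgK : ∀ K : Set X, IsCompact K → ContinuousOn g K := by
    intro K hK k hk
    by_cases hφk : φ k = 0
    · -- squeeze
      have hgk : g k = 0 := by rw [hg]; simp [hφk]
      rw [ContinuousWithinAt, hgk]
      apply squeeze_zero_norm (fun x => (hgbd x))
      have : Tendsto φ (𝓝[K] k) (𝓝 (φ k)) :=
        (hφc.tendsto k).mono_left nhdsWithin_le_nhds
      rwa [hφk] at this
    · have hφkpos : 0 < φ k := lt_of_le_of_ne (hφmem k).1 (Ne.symm hφk)
      set ε := φ k / 2 with hε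
      have hεpos : 0 < ε := by positivity
      set S := K ∩ φ ⁻¹' (Ici ε) with hS
      have hScpt : IsCompact S := hK.inter_right (isClosed_Ici.preimage hφc)
      have hSU : S ⊆ U := fun x hx => hφpos x (lt_of_lt_of_le hεpos hx.2)
      have hS'cpt : IsCompact ((Subtype.val : U → X) ⁻¹' S) := by
        rw [Subtype.isCompact_iff]
        have : (Subtype.val : U → X) '' ((Subtype.val : U → X) ⁻¹' S) = S := by
          rw [Subtype.image_preimage_coe]
          exact inter_eq_right.mpr hSU
        rwa [this]
      have hf'S := hf'cont _ hS'cpt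
      have hFS : ContinuousOn F S := by
        rw [continuousOn_iff_continuous_restrict]
        rw [continuousOn_iff_continuous_restrict] at hf'S
        have hj : Continuous (fun x : S => (⟨⟨x.1, hSU x.2⟩, x.2⟩ :
            (Subtype.val : U → X) ⁻¹' S)) :=
          Continuous.subtype_mk (Continuous.subtype_mk continuous_subtype_val _) _
        have := hf'S.comp hj
        convert this using 1
        ext x
        simp only [Set.domRestrict, Function.comp, hF, dif_pos (hSU x.2)]
      have hgS : ContinuousOn g S :=
        (hφc.continuousOn).mul (hFS.sub continuousOn_const)
      have hSmem : S ∈ 𝓝[K] k := by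
        apply mem_nhdsWithin_iff_exists_mem_nhds_inter.mpr
        refine ⟨φ ⁻¹' (Ioi ε), hφc.continuousAt.preimage_mem_nhds ?_, ?_⟩
        · exact Ioi_mem_nhds (by rw [hε]; linarith)
        · intro x hx
          exact ⟨hx.2, show ε ≤ φ x from le_of_lt hx.1⟩
      have hkS : k ∈ S := ⟨hk, show ε ≤ φ k by rw [hε]; linarith⟩
      exact (hgS k hkS).mono_of_mem_nhdsWithin hSmem
  have hgc : Continuous g := hX g hgK
  -- continuity of f' at x₀
  have hφU : ∀ x : U, g x = φ x * (f' x - c) := by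
    intro x
    simp only [hg, hF, dif_pos x.2]
  have hh : ContinuousAt (fun x : U => g x / φ x + c) x₀ := by
    apply ContinuousAt.add _ continuousAt_const
    apply ContinuousAt.div
    · exact (hgc.comp continuous_subtype_val).continuousAt
    · exact (hφc.comp continuous_subtype_val).continuousAt
    · rw [hφ1]; norm_num
  have hmem : {x : U | φ x ≠ 0} ∈ 𝓝 x₀ := by
    apply IsOpen.mem_nhds
    · exact isOpen_compl_singleton.preimage (hφc.comp continuous_subtype_val)
    · simp [hφ1]
  have hev : (fun x : U => g x / φ x + c) =ᶠ[𝓝 x₀] f' := by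
    filter_upwards [hmem] with x hx
    rw [hφU x, mul_div_cancel_left₀ _ hx]
    ring
  have hcf' : ContinuousAt f' x₀ := hh.congr hev
  -- deduce continuity of f at x₀
  have hmem2 : {x : U | f' x ∈ Ioo (c - 1) (c + 1)} ∈ 𝓝 x₀ := by
    apply hcf'.preimage_mem_nhds
    rw [hf'x₀]
    exact Ioo_mem_nhds (by linarith) (by linarith)
  have heq : ∀ x : U, f' x ∈ Ioo (c - 1) (c + 1) → f' x = f x := by
    intro x hx
    have h2 : f x ≤ c + 1 := by
      by_contra h
      push_neg at h
      have he : f' x = c + 1 := by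
        show max (c - 1) (min (c + 1) (f x)) = c + 1
        rw [min_eq_left h.le, max_eq_right (by linarith)]
      rw [he] at hx; exact lt_irrefl _ hx.2
    have h1 : c - 1 < f x := by
      by_contra h
      push_neg at h
      have he : f' x = c - 1 := by
        show max (c - 1) (min (c + 1) (f x)) = c - 1
        rw [min_eq_right (by linarith), max_eq_left (by linarith)]
      rw [he] at hx; exact lt_irrefl _ hx.1
    show max (c - 1) (min (c + 1) (f x)) = f x
    rw [min_eq_right h2, max_eq_right h1.le]
  apply hcf'.congr
  filter_upwards [hmem2] with x hx
  exact heq x hx
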